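/- Let u, v, w be three distinct top vertices drawn in this order from top to bottom, B a finite bottom set, and Adj a function assigning to each b ∈ B a nonempty subset Adj(b) ⊆ {u,v,w} with |Adj(b)| ≤ 2 for all b, such that exactly one vertex a ∈ B has Adj(a) = {u,w}. Let k_uv = |{b ∈ B : Adj(b) = {u,v}}|, k_vw = |{b ∈ B : Adj(b) = {v,w}}|, and m = |{b ∈ B : v ∈ Adj(b)}|. Then there exists a linear order ≺ on B with cr(≺) ≤ k_uv·(k_uv−1)/2 + k_vw·(k_vw−1)/2 + m. -/

import Mathlib

/-- `Above u v w s t` says that top vertex `s` is drawn above top vertex `t`,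
where the top layer consists of `u`, `v`, `w` drawn in this order from top to
bottom. -/
def Above {T : Type} (u v w : T) (s t : T) : Prop :=
  (s = u ∧ t = v) ∨ (s = u ∧ t = w) ∨ (s = v ∧ t = w)

/-- Crossing count of a 2-layer drawing with top layer `u, v, w` (top to bottom):
the number of unordered pairs of edges that cross, counted via the ordered pairs
of edges `((s,a),(t,b))` with `s ∈ Adj a`, `t ∈ Adj b`, `s` drawn above `t` and
`b ≺ a`. -/
noncomputable def crossNum3 {T B : Type} (u v w : T) (Adj : B → Set T)
    (lt : B → B → Prop) : ℕ :=
  {q : (T × B) × (T × B) | q.1.1 ∈ Adj q.1.2 ∧ q.2.1 ∈ Adj q.2.2 ∧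
    Above u v w q.1.1 q.2.1 ∧ lt q.2.2 q.1.2}.ncard


section Aux


variable {T B : Type}

open Classical in
/-- class of a bottom vertex: 0 = {u}, 1 = {u,v}, 2 = {u,w}, 3 = {v}, 4 = {v,w}, 5 = {w} -/
noncomputable def cc3 (u v w : T) (Adj : B → Set T) (b : B) : ℕ :=
  if u ∈ Adj b then (if v ∈ Adj b then 1 else if w ∈ Adj b then 2 else 0)
  else if w ∈ Adj b then (if v ∈ Adj b then 4 else 5) else 3

noncomputable def key3 [Fintype B] (u v w : T) (Adj : B → Set T) (b : B) : ℕ :=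
  cc3 u v w Adj b * Fintype.card B + ((Fintype.equivFin B) b : ℕ)

variable {u v w : T} {Adj : B → Set T}

lemma key3_lt_of_cc3_lt [Fintype B] {b b' : B}
    (h : cc3 u v w Adj b < cc3 u v w Adj b') : key3 u v w Adj b < key3 u v w Adj b' := by
  have h1 : ((Fintype.equivFin B) b : ℕ) < Fintype.card B := ((Fintype.equivFin B) b).isLt
  unfold key3
  nlinarith

lemma cc3_le_of_key3_lt [Fintype B] {b b' : B}
    (h : key3 u v w Adj b < key3 u v w Adj b') : cc3 u v w Adj b ≤ cc3 u v w Adj b' := by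
  by_contra hc
  have h2 : cc3 u v w Adj b' < cc3 u v w Adj b := by omega
  have := key3_lt_of_cc3_lt (u := u) (v := v) (w := w) (Adj := Adj) h2
  omega

lemma key3_inj [Fintype B] {b b' : B}
    (h : key3 u v w Adj b = key3 u v w Adj b') : b = b' := by
  have hcc : cc3 u v w Adj b = cc3 u v w Adj b' := by
    rcases Nat.lt_trichotomy (cc3 u v w Adj b) (cc3 u v w Adj b') with hl | he | hr
    · exact absurd (key3_lt_of_cc3_lt hl) (by omega)
    · exact he
    · exact absurd (key3_lt_of_cc3_lt hr) (by omega)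
  have : ((Fintype.equivFin B) b : ℕ) = ((Fintype.equivFin B) b' : ℕ) := by
    unfold key3 at h; rw [hcc] at h; omega
  exact (Fintype.equivFin B).injective (Fin.ext this)

lemma cc3_le_two_of_u {b : B} (hu : u ∈ Adj b) : cc3 u v w Adj b ≤ 2 := by
  unfold cc3; split_ifs <;> omega

lemma cc3_of_v {b : B} (hv : v ∈ Adj b) :
    cc3 u v w Adj b = 1 ∨ cc3 u v w Adj b = 3 ∨ cc3 u v w Adj b = 4 := by
  unfold cc3; split_ifs <;> simp_all

lemma no_three {b : B} (hdeg : (Adj b).ncard ≤ 2) (hsub : Adj b ⊆ {u, v, w})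
    (huv : u ≠ v) (huw : u ≠ w) (hvw : v ≠ w) :
    ¬ (u ∈ Adj b ∧ v ∈ Adj b ∧ w ∈ Adj b) := by
  rintro ⟨hu, hv, hw⟩
  have heq : Adj b = {u, v, w} := Set.Subset.antisymm hsub (by
    intro x hx; rcases hx with h | h | h <;> subst h <;> assumption)
  have : (Adj b).ncard = 3 := by
    rw [heq]
    rw [Set.ncard_insert_of_notMem (by simp [huv, huw]) (Set.toFinite _),
      Set.ncard_pair hvw]
  omega

lemma cc3_of_w {b : B} (hdeg : (Adj b).ncard ≤ 2) (hsub : Adj b ⊆ {u, v, w})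
    (huv : u ≠ v) (huw : u ≠ w) (hvw : v ≠ w) (hw : w ∈ Adj b) :
    cc3 u v w Adj b = 2 ∨ cc3 u v w Adj b = 4 ∨ cc3 u v w Adj b = 5 := by
  have h3 := no_three hdeg hsub huv huw hvw
  unfold cc3; split_ifs <;> simp_all

lemma cc3_eq_one {b : B} (hdeg : (Adj b).ncard ≤ 2) (hsub : Adj b ⊆ {u, v, w})
    (huv : u ≠ v) (huw : u ≠ w) (hvw : v ≠ w) (h : cc3 u v w Adj b = 1) :
    Adj b = {u, v} := by
  have h3 := no_three hdeg hsub huv huw hvw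
  unfold cc3 at h
  split_ifs at h with h1 h2 h4 h5 <;> try omega
  · apply Set.Subset.antisymm
    · intro x hx
      rcases hsub hx with hh | hh | hh
      · exact Or.inl hh
      · exact Or.inr hh
      · exact absurd ⟨h1, h2, hh ▸ hx⟩ h3
    · intro x hx; rcases hx with hh | hh <;> subst hh <;> assumption

lemma cc3_eq_two {b : B} (hsub : Adj b ⊆ {u, v, w}) (h : cc3 u v w Adj b = 2) :
    Adj b = {u, w} := by
  unfold cc3 at h
  split_ifs at h with h1 h2 h4 <;> try omega
  · apply Set.Subset.antisymm
    · intro x hx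
      rcases hsub hx with hh | hh | hh
      · exact Or.inl hh
      · exact absurd (hh ▸ hx) h2
      · exact Or.inr hh
    · intro x hx; rcases hx with hh | hh <;> subst hh <;> assumption

lemma cc3_eq_four {b : B} (hsub : Adj b ⊆ {u, v, w}) (h : cc3 u v w Adj b = 4) :
    Adj b = {v, w} := by
  unfold cc3 at h
  split_ifs at h with h1 h2 h4 h5 <;> try omega
  · apply Set.Subset.antisymm
    · intro x hx
      rcases hsub hx with hh | hh | hh
      · exact absurd (hh ▸ hx) h1
      · exact Or.inl hh
      · exact Or.inr hh
    · intro x hx; rcases hx with hh | hh <;> subst hh <;> assumption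

lemma cc3_uv {b : B} (h : Adj b = {u, v}) : cc3 u v w Adj b = 1 := by
  unfold cc3
  have hu : u ∈ Adj b := by rw [h]; exact Or.inl rfl
  have hv : v ∈ Adj b := by rw [h]; exact Or.inr rfl
  simp [hu, hv]

lemma cc3_vw {b : B} (huv : u ≠ v) (huw : u ≠ w) (h : Adj b = {v, w}) :
    cc3 u v w Adj b = 4 := by
  unfold cc3
  have hu : u ∉ Adj b := by rw [h]; rintro (hh | hh) <;> simp_all
  have hv : v ∈ Adj b := by rw [h]; exact Or.inl rfl
  have hw : w ∈ Adj b := by rw [h]; exact Or.inr rfl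
  simp [hu, hv, hw]

lemma cc3_uw {b : B} (huv : u ≠ v) (hvw : v ≠ w) (h : Adj b = {u, w}) :
    cc3 u v w Adj b = 2 := by
  unfold cc3
  have hu : u ∈ Adj b := by rw [h]; exact Or.inl rfl
  have hv : v ∉ Adj b := by rw [h]; rintro (hh | hh) <;> simp_all
  have hw : w ∈ Adj b := by rw [h]; exact Or.inr rfl
  simp [hu, hv, hw]


end Aux

/-- If every bottom vertex is adjacent to at most two of the top vertices
`u, v, w` and exactly one bottom vertex `a` has `Adj a = {u, w}`, then there is a
linear order on the bottom layer with at most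
`k_uv·(k_uv−1)/2 + k_vw·(k_vw−1)/2 + m` crossings. -/


theorem stmt6 {T B : Type} [Fintype B] (u v w : T)
    (huv : u ≠ v) (huw : u ≠ w) (hvw : v ≠ w)
    (Adj : B → Set T) (hsub : ∀ b, Adj b ⊆ {u, v, w})
    (hne : ∀ b, (Adj b).Nonempty) (hdeg : ∀ b, (Adj b).ncard ≤ 2)
    (ha : ∃! a : B, Adj a = {u, w})
    (kuv kvw m : ℕ)
    (hkuv : kuv = {b : B | Adj b = {u, v}}.ncard)
    (hkvw : kvw = {b : B | Adj b = {v, w}}.ncard)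
    (hm : m = {b : B | v ∈ Adj b}.ncard) :
    ∃ lt : B → B → Prop, IsStrictTotalOrder B lt ∧
      crossNum3 u v w Adj lt
        ≤ kuv * (kuv - 1) / 2 + kvw * (kvw - 1) / 2 + m := by
  classical
  obtain ⟨a, haa, huniq⟩ := ha
  set c : B → ℕ := cc3 u v w Adj with hcdef
  set key : B → ℕ := key3 u v w Adj with hkeydef
  set L : B → B → Prop := fun b b' => key b < key b' with hLdef
  have hLc : ∀ {b b' : B}, L b b' → c b ≤ c b' := fun h => cc3_le_of_key3_lt h
  have hLofc : ∀ {b b' : B}, c b < c b' → L b b' := fun h => key3_lt_of_cc3_lt h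
  have hca : c a = 2 := cc3_uw huv hvw haa
  have hc2 : ∀ b : B, c b = 2 → b = a := fun b h => huniq b (cc3_eq_two (hsub b) h)
  have hcna : ∀ b : B, b ≠ a → c b ≠ 2 := fun b hb h => hb (hc2 b h)
  refine ⟨L, ?_, ?_⟩
  · exact { trichotomous := fun b b' => by
              rcases Nat.lt_trichotomy (key b) (key b') with h | h | h
              · exact fun h1 _ => absurd h h1
              · exact fun _ _ => key3_inj h
              · exact fun _ h2 => absurd h h2,
            irrefl := fun b => by simp [hLdef],
            trans := fun b b' b'' h1 h2 => Nat.lt_trans h1 h2 }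
  -- the counting part
  simp only [crossNum3]
  set Cr : Set ((T × B) × (T × B)) := {q | q.1.1 ∈ Adj q.1.2 ∧ q.2.1 ∈ Adj q.2.2 ∧
    Above u v w q.1.1 q.2.1 ∧ L q.2.2 q.1.2} with hCrdef
  set S1 : Set ((T × B) × (T × B)) := {q | q ∈ Cr ∧ Adj q.1.2 = {u, v} ∧ Adj q.2.2 = {u, v}}
    with hS1def
  set S2 : Set ((T × B) × (T × B)) := {q | q ∈ Cr ∧ Adj q.1.2 = {v, w} ∧ Adj q.2.2 = {v, w}}
    with hS2def
  set S3 : Set ((T × B) × (T × B)) := {q | q ∈ Cr ∧ (q.1.2 = a ∨ q.2.2 = a)} with hS3def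
  have hCrFin : Cr.Finite := by
    have hBig : ((({u, v, w} : Set T) ×ˢ (Set.univ : Set B)) ×ˢ
        (({u, v, w} : Set T) ×ˢ (Set.univ : Set B))).Finite := by
      refine Set.Finite.prod (Set.Finite.prod ?_ Set.finite_univ)
        (Set.Finite.prod ?_ Set.finite_univ) <;>
        exact ((Set.finite_singleton w).insert v).insert u
    refine hBig.subset ?_
    rintro ⟨⟨s, x⟩, ⟨t, y⟩⟩ ⟨h1, h2, _, _⟩
    exact ⟨⟨hsub x h1, trivial⟩, ⟨hsub y h2, trivial⟩⟩
  -- splitting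
  have hsplit : Cr ⊆ S1 ∪ S2 ∪ S3 := by
    rintro ⟨⟨s, x⟩, ⟨t, y⟩⟩ hq
    have hqq := hq
    obtain ⟨hs, ht, hab, hlt⟩ := hq
    simp only at hs ht hab hlt
    simp only [Set.mem_union]
    by_cases hxa : x = a
    · exact Or.inr ⟨hqq, Or.inl hxa⟩
    by_cases hya : y = a
    · exact Or.inr ⟨hqq, Or.inr hya⟩
    have hcyx : c y ≤ c x := hLc hlt
    have hcx2 : c x ≠ 2 := hcna x hxa
    have hcy2 : c y ≠ 2 := hcna y hya
    rcases hab with ⟨rfl, rfl⟩ | ⟨rfl, rfl⟩ | ⟨rfl, rfl⟩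
    · -- s = u, t = v
      have h1 : c x ≤ 2 := cc3_le_two_of_u hs
      have h2 : c y = 1 ∨ c y = 3 ∨ c y = 4 := cc3_of_v ht
      have hx1 : c x = 1 := by omega
      have hy1 : c y = 1 := by omega
      exact Or.inl (Or.inl ⟨hqq,
        cc3_eq_one (hdeg x) (hsub x) huv huw hvw hx1,
        cc3_eq_one (hdeg y) (hsub y) huv huw hvw hy1⟩)
    · -- s = u, t = w
      have h1 : c x ≤ 2 := cc3_le_two_of_u hs
      have h2 : c y = 2 ∨ c y = 4 ∨ c y = 5 := cc3_of_w (hdeg y) (hsub y) huv huw hvw ht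
      omega
    · -- s = v, t = w
      have h1 : c x = 1 ∨ c x = 3 ∨ c x = 4 := cc3_of_v hs
      have h2 : c y = 2 ∨ c y = 4 ∨ c y = 5 := cc3_of_w (hdeg y) (hsub y) huv huw hvw ht
      have hx4 : c x = 4 := by omega
      have hy4 : c y = 4 := by omega
      exact Or.inl (Or.inr ⟨hqq,
        cc3_eq_four (hsub x) hx4, cc3_eq_four (hsub y) hy4⟩)
  have hS1sub : S1 ⊆ Cr := fun q hq => hq.1
  have hS2sub : S2 ⊆ Cr := fun q hq => hq.1
  have hS3sub : S3 ⊆ Cr := fun q hq => hq.1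
  have hUsub : S1 ∪ S2 ∪ S3 ⊆ Cr := by
    rintro q ((hq | hq) | hq)
    exacts [hS1sub hq, hS2sub hq, hS3sub hq]
  -- forced form lemmas
  have hform1 : ∀ q ∈ S1, q.1.1 = u ∧ q.2.1 = v := by
    intro q hq
    obtain ⟨hqc, hx, hy⟩ := hq
    obtain ⟨hs, ht, hab, hlt⟩ := hqc
    rcases hab with ⟨h1, h2⟩ | ⟨h1, h2⟩ | ⟨h1, h2⟩
    · exact ⟨h1, h2⟩
    · exfalso
      rw [hy, h2] at ht
      rcases ht with h | h
      · exact absurd h.symm huw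
      · exact absurd h.symm hvw
    · exfalso
      rw [hy, h2] at ht
      rcases ht with h | h
      · exact absurd h.symm huw
      · exact absurd h.symm hvw
  have hform2 : ∀ q ∈ S2, q.1.1 = v ∧ q.2.1 = w := by
    intro q hq
    obtain ⟨hqc, hx, hy⟩ := hq
    obtain ⟨hs, ht, hab, hlt⟩ := hqc
    rcases hab with ⟨h1, h2⟩ | ⟨h1, h2⟩ | ⟨h1, h2⟩
    · exfalso
      rw [hx, h1] at hs
      rcases hs with h | h
      · exact absurd h huv
      · exact absurd h huw
    · exfalso
      rw [hx, h1] at hs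
      rcases hs with h | h
      · exact absurd h huv
      · exact absurd h huw
    · exact ⟨h1, h2⟩
  have hform3 : ∀ q ∈ S3,
      (q.1.2 = a ∧ q.1.1 = u ∧ q.2.1 = v ∧ v ∈ Adj q.2.2 ∧ L q.2.2 a) ∨
      (q.1.2 ≠ a ∧ q.2.2 = a ∧ q.1.1 = v ∧ q.2.1 = w ∧ v ∈ Adj q.1.2 ∧ L a q.1.2) := by
    intro q hq
    obtain ⟨hqc, hor⟩ := hq
    obtain ⟨hs, ht, hab, hlt⟩ := hqc
    have hltk : key q.2.2 < key q.1.2 := hlt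
    have hxy : q.2.2 ≠ q.1.2 := fun h => by rw [h] at hltk; omega
    rcases hor with hxa | hya
    · left
      refine ⟨hxa, ?_⟩
      rw [hxa, haa] at hs
      have hya : q.2.2 ≠ a := by rw [← hxa]; exact hxy
      rcases hab with ⟨h1, h2⟩ | ⟨h1, h2⟩ | ⟨h1, h2⟩
      · refine ⟨h1, h2, ?_, ?_⟩
        · rw [← h2]; exact ht
        · rw [← hxa]; exact hlt
      · exfalso
        rw [h2] at ht
        have h2' : c q.2.2 = 2 ∨ c q.2.2 = 4 ∨ c q.2.2 = 5 :=
          cc3_of_w (hdeg _) (hsub _) huv huw hvw ht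
        have hcy2 : c q.2.2 ≠ 2 := hcna _ hya
        have hL1 : L a q.2.2 := hLofc (by omega)
        have k2 : key a < key q.2.2 := hL1
        rw [hxa] at hltk
        omega
      · exfalso
        rw [h1] at hs
        rcases hs with h | h
        · exact huv h.symm
        · exact hvw h
    · right
      have hxa : q.1.2 ≠ a := fun h => hxy (by rw [hya, h])
      refine ⟨hxa, hya, ?_⟩
      rw [hya, haa] at ht
      rcases hab with ⟨h1, h2⟩ | ⟨h1, h2⟩ | ⟨h1, h2⟩
      · exfalso
        rw [h2] at ht
        rcases ht with h | h
        · exact huv h.symm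
        · exact hvw h
      · exfalso
        rw [h1] at hs
        have h1' : c q.1.2 ≤ 2 := cc3_le_two_of_u hs
        have hcx2 : c q.1.2 ≠ 2 := hcna _ hxa
        have hL1 : L q.1.2 a := hLofc (by omega)
        have k2 : key q.1.2 < key a := hL1
        rw [hya] at hltk
        omega
      · refine ⟨h1, h2, ?_, ?_⟩
        · rw [← h1]; exact hs
        · rw [← hya]; exact hlt
  -- bound on S1
  have hboundUV : ∀ (k : ℕ) (z z' : T), z ≠ z' →
      k = {b : B | Adj b = {z, z'}}.ncard →
      (∀ q ∈ ({q | q ∈ Cr ∧ Adj q.1.2 = {z, z'} ∧ Adj q.2.2 = {z, z'}} :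
        Set ((T × B) × (T × B))), q.1.1 = z ∧ q.2.1 = z') →
      ({q | q ∈ Cr ∧ Adj q.1.2 = {z, z'} ∧ Adj q.2.2 = {z, z'}} :
        Set ((T × B) × (T × B))).ncard ≤ k * (k - 1) / 2 := by
    intro k z z' hzz hk hform
    set S : Set ((T × B) × (T × B)) :=
      {q | q ∈ Cr ∧ Adj q.1.2 = {z, z'} ∧ Adj q.2.2 = {z, z'}} with hSdef
    have hfin : ({b : B | Adj b = {z, z'}}).Finite := Set.toFinite _
    set P : Finset B := hfin.toFinset with hPdef
    have hPcard : P.card = k := by rw [hk, Set.ncard_eq_toFinset_card _ hfin]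
    have hmain : S.ncard ≤ ((P.powersetCard 2 : Finset (Finset B)) : Set (Finset B)).ncard := by
      apply Set.ncard_le_ncard_of_injOn (fun q => ({q.1.2, q.2.2} : Finset B))
      · intro q hq
        obtain ⟨hqc, hx, hy⟩ := hq
        obtain ⟨hs, ht, hab, hlt⟩ := hqc
        obtain ⟨⟨s, x⟩, ⟨t, y⟩⟩ := q
        simp only at hs ht hab hlt hx hy ⊢
        rw [Finset.mem_coe, Finset.mem_powersetCard]
        have hyx : y ≠ x := by
          intro h; rw [h] at hlt; exact absurd hlt (by simp [hLdef])
        constructor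
        · intro b hb
          rcases Finset.mem_insert.1 hb with rfl | hb
          · simp [hPdef, Set.Finite.mem_toFinset, hx]
          · rcases Finset.mem_singleton.1 hb with rfl
            simp [hPdef, Set.Finite.mem_toFinset, hy]
        · exact Finset.card_pair (Ne.symm hyx)
      · intro q hq q' hq' hfq
        obtain ⟨hsz, htz⟩ := hform _ hq
        obtain ⟨hsz', htz'⟩ := hform _ hq'
        obtain ⟨hqc, _, _⟩ := hq
        obtain ⟨_, _, _, hlt⟩ := hqc
        obtain ⟨hqc', _, _⟩ := hq'
        obtain ⟨_, _, _, hlt'⟩ := hqc'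
        obtain ⟨⟨s, x⟩, ⟨t, y⟩⟩ := q
        obtain ⟨⟨s', x'⟩, ⟨t', y'⟩⟩ := q'
        simp only at hsz htz hsz' htz' hfq hlt hlt'
        have hyx : key y < key x := hlt
        have hyx' : key y' < key x' := hlt'
        have hxm : x ∈ ({x', y'} : Finset B) := by
          rw [← hfq]; exact Finset.mem_insert_self _ _
        have hym : y ∈ ({x', y'} : Finset B) := by
          rw [← hfq]; exact Finset.mem_insert_of_mem (Finset.mem_singleton_self _)
        have hxx : x = x' := by
          rcases Finset.mem_insert.1 hxm with h | h
          · exact h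
          · -- x = y'
            exfalso
            rcases Finset.mem_insert.1 hym with h2 | h2
            · -- y = x' : key x' < key y' = key x < key y < key x
              rw [Finset.mem_singleton] at h
              subst h; subst h2; omega
            · rw [Finset.mem_singleton] at h h2
              rw [← h] at h2
              -- y = x
              rw [h2] at hyx; omega
        subst hxx
        have hyy : y = y' := by
          rcases Finset.mem_insert.1 hym with h | h
          · rw [h] at hyx; omega
          · exact Finset.mem_singleton.1 h
        subst hyy
        subst hsz; subst htz; subst hsz'; subst htz'
        rfl
    rwa [Set.ncard_coe_finset, Finset.card_powersetCard, hPcard, Nat.choose_two_right] at hmain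
  have hS1bound : S1.ncard ≤ kuv * (kuv - 1) / 2 := hboundUV kuv u v huv hkuv hform1
  have hS2bound : S2.ncard ≤ kvw * (kvw - 1) / 2 := hboundUV kvw v w hvw hkvw hform2
  -- bound on S3
  have hS3bound : S3.ncard ≤ m := by
    rw [hm]
    apply Set.ncard_le_ncard_of_injOn (fun q => if q.1.2 = a then q.2.2 else q.1.2)
    · intro q hq
      rcases hform3 q hq with ⟨h1, _, _, h4, _⟩ | ⟨h1, _, _, _, h5, _⟩
      · simp only [h1, if_pos rfl]; exact h4
      · simp only [if_neg h1]; exact h5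
    · intro q hq q' hq' hfq
      rcases hform3 q hq with ⟨h1, h2, h3, h4, h5⟩ | ⟨h1, h2, h3, h4, h5, h6⟩ <;>
        rcases hform3 q' hq' with ⟨h1', h2', h3', h4', h5'⟩ | ⟨h1', h2', h3', h4', h5', h6'⟩ <;>
        (have hfq : (if q.1.2 = a then q.2.2 else q.1.2) =
          (if q'.1.2 = a then q'.2.2 else q'.1.2) := hfq)
      · rw [if_pos h1, if_pos h1'] at hfq
        have e1 : q.1 = q'.1 := Prod.ext (h2.trans h2'.symm) (h1.trans h1'.symm)
        have e2 : q.2 = q'.2 := Prod.ext (h3.trans h3'.symm) hfq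
        exact Prod.ext e1 e2
      · exfalso
        rw [if_pos h1, if_neg h1'] at hfq
        have k1 : key q.2.2 < key a := h5
        have k2 : key a < key q'.1.2 := h6'
        rw [hfq] at k1; omega
      · exfalso
        rw [if_neg h1, if_pos h1'] at hfq
        have k1 : key a < key q.1.2 := h6
        have k2 : key q'.2.2 < key a := h5'
        rw [← hfq] at k2; omega
      · rw [if_neg h1, if_neg h1'] at hfq
        have e1 : q.1 = q'.1 := Prod.ext (h3.trans h3'.symm) hfq
        have e2 : q.2 = q'.2 := Prod.ext (h4.trans h4'.symm) (h2.trans h2'.symm)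
        exact Prod.ext e1 e2
  calc Cr.ncard ≤ (S1 ∪ S2 ∪ S3).ncard :=
        Set.ncard_le_ncard hsplit (hCrFin.subset hUsub)
    _ ≤ (S1 ∪ S2).ncard + S3.ncard := Set.ncard_union_le _ _
    _ ≤ S1.ncard + S2.ncard + S3.ncard := by
        have := Set.ncard_union_le S1 S2; omega
    _ ≤ kuv * (kuv - 1) / 2 + kvw * (kvw - 1) / 2 + m := by omega
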